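/- Sharpened Sundman inequality: for N point masses with total angular momentum H ≠ 0, letting ĥ = H/|H| and I_H = Σ m_i (|r_i|² − ⟨ĥ, r_i⟩²) be the moment of inertia about the axis ĥ, one has |H|² ≤ 2 I_H T, where T = (1/2) Σ m_i |v_i|². -/

import Mathlib

open RealInnerProductSpace

/-- The cross product of two vectors in Euclidean 3-space. -/
noncomputable def cross3 (a b : EuclideanSpace ℝ (Fin 3)) : EuclideanSpace ℝ (Fin 3) :=
  (WithLp.equiv 2 (Fin 3 → ℝ)).symm
    ![a 1 * b 2 - a 2 * b 1, a 2 * b 0 - a 0 * b 2, a 0 * b 1 - a 1 * b 0]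

lemma cross3_triple (a r v : EuclideanSpace ℝ (Fin 3)) :
    ⟪a, cross3 r v⟫ = ⟪cross3 a r, v⟫ := by
  simp [cross3, PiLp.inner_apply, RCLike.inner_apply, Fin.sum_univ_three]
  ring

lemma cross3_lagrange (a b : EuclideanSpace ℝ (Fin 3)) :
    ‖cross3 a b‖ ^ 2 = ‖a‖ ^ 2 * ‖b‖ ^ 2 - ⟪a, b⟫ ^ 2 := by
  rw [← real_inner_self_eq_norm_sq, ← real_inner_self_eq_norm_sq,
    ← real_inner_self_eq_norm_sq]
  simp [cross3, PiLp.inner_apply, RCLike.inner_apply, Fin.sum_univ_three, -real_inner_self_eq_norm_sq, -inner_self_eq_norm_sq_to_K]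
  ring

theorem sharpened_sundman_inequality (N : ℕ) (m : Fin N → ℝ) (hm : ∀ i, 0 < m i)
    (r v : Fin N → EuclideanSpace ℝ (Fin 3))
    (H : EuclideanSpace ℝ (Fin 3))
    (hH : H = ∑ i, m i • cross3 (r i) (v i)) (hH0 : H ≠ 0) :
    ‖H‖ ^ 2 ≤
      2 * (∑ i, m i * (‖r i‖ ^ 2 - ⟪‖H‖⁻¹ • H, r i⟫ ^ 2)) *
        ((1 / 2) * ∑ i, m i * ‖v i‖ ^ 2) := by
  set a : EuclideanSpace ℝ (Fin 3) := ‖H‖⁻¹ • H with ha_def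
  have hHnorm : ‖H‖ ≠ 0 := norm_ne_zero_iff.mpr hH0
  have hanorm : ‖a‖ = 1 := by
    rw [ha_def, norm_smul, norm_inv, norm_norm, inv_mul_cancel₀ hHnorm]
  have haH : ⟪a, H⟫ = ‖H‖ := by
    rw [ha_def, real_inner_smul_left, real_inner_self_eq_norm_sq]
    field_simp
  -- Key sum identity
  have hS : (∑ i, m i * ⟪cross3 a (r i), v i⟫) = ‖H‖ := by
    rw [← haH, hH, inner_sum]
    refine Finset.sum_congr rfl fun i _ => ?_
    rw [real_inner_smul_right, cross3_triple]
  set f : Fin N → ℝ := fun i => Real.sqrt (m i) * ‖cross3 a (r i)‖ with hf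
  set g : Fin N → ℝ := fun i => Real.sqrt (m i) * ‖v i‖ with hg
  have hfg : (∑ i, m i * ⟪cross3 a (r i), v i⟫) ≤ ∑ i, f i * g i := by
    refine Finset.sum_le_sum fun i _ => ?_
    have h1 : ⟪cross3 a (r i), v i⟫ ≤ ‖cross3 a (r i)‖ * ‖v i‖ :=
      real_inner_le_norm _ _
    have h2 : Real.sqrt (m i) * Real.sqrt (m i) = m i :=
      Real.mul_self_sqrt (hm i).le
    calc m i * ⟪cross3 a (r i), v i⟫ ≤ m i * (‖cross3 a (r i)‖ * ‖v i‖) := by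
          exact mul_le_mul_of_nonneg_left h1 (hm i).le
      _ = f i * g i := by
          simp only [hf, hg]; rw [mul_mul_mul_comm, h2]
  have hS0 : (0:ℝ) ≤ ∑ i, m i * ⟪cross3 a (r i), v i⟫ := by
    rw [hS]; positivity
  have hcs : (∑ i, f i * g i) ^ 2 ≤ (∑ i, f i ^ 2) * (∑ i, g i ^ 2) :=
    Finset.sum_mul_sq_le_sq_mul_sq _ _ _
  have hf2 : (∑ i, f i ^ 2) = ∑ i, m i * (‖r i‖ ^ 2 - ⟪a, r i⟫ ^ 2) := by
    refine Finset.sum_congr rfl fun i _ => ?_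
    rw [hf]; simp only []
    rw [mul_pow, Real.sq_sqrt (hm i).le, cross3_lagrange, hanorm]
    ring
  have hg2 : (∑ i, g i ^ 2) = ∑ i, m i * ‖v i‖ ^ 2 := by
    refine Finset.sum_congr rfl fun i _ => ?_
    rw [hg]; simp only []
    rw [mul_pow, Real.sq_sqrt (hm i).le]
  have hfg0 : (0:ℝ) ≤ ∑ i, f i * g i := le_trans hS0 hfg
  have key : ‖H‖ ^ 2 ≤ (∑ i, m i * (‖r i‖ ^ 2 - ⟪a, r i⟫ ^ 2)) *
      (∑ i, m i * ‖v i‖ ^ 2) := by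
    rw [← hS, ← hf2, ← hg2]
    calc (∑ i, m i * ⟪cross3 a (r i), v i⟫) ^ 2 ≤ (∑ i, f i * g i) ^ 2 :=
          pow_le_pow_left₀ hS0 hfg 2
      _ ≤ _ := hcs
  calc ‖H‖ ^ 2 ≤ (∑ i, m i * (‖r i‖ ^ 2 - ⟪a, r i⟫ ^ 2)) *
      (∑ i, m i * ‖v i‖ ^ 2) := key
    _ = 2 * (∑ i, m i * (‖r i‖ ^ 2 - ⟪a, r i⟫ ^ 2)) *
        ((1 / 2) * ∑ i, m i * ‖v i‖ ^ 2) := by ring
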